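/- Let ρ be a normalized proximate order function with limit ρ₀ > 0 and let φ be the inverse of r ↦ r^{ρ(r)}. Then lim_{t→∞} t·φ'(t)/φ(t) = 1/ρ₀. -/

import Mathlib

open Filter Real

/-- For the inverse φ of r ↦ r^{ρ(r)} of a normalized proximate order function,
lim_{t→∞} t·φ'(t)/φ(t) = 1/ρ₀. -/
theorem stmt_4 (ρ : ℝ → ℝ) (ρ₀ : ℝ) (hρ₀ : 0 < ρ₀)
    (hdiff : Differentiable ℝ ρ)
    (hpos : ∀ r, 0 ≤ r → 0 ≤ ρ r)
    (hlim : Filter.Tendsto ρ Filter.atTop (nhds ρ₀))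
    (hder : Filter.Tendsto (fun r => deriv ρ r * r * Real.log r) Filter.atTop (nhds 0))
    (hmono : StrictMonoOn (fun r => r ^ ρ r) (Set.Ioi (0:ℝ)))
    (hzero : Filter.Tendsto (fun r => r ^ ρ r) (nhdsWithin 0 (Set.Ioi 0)) (nhds 0))
    (φ : ℝ → ℝ) (hφpos : ∀ t, 0 < t → 0 < φ t)
    (hφ : ∀ r, 0 < r → φ (r ^ ρ r) = r)
    (hφ' : ∀ t, 0 < t → (φ t) ^ ρ (φ t) = t)
    (hφdiff : ∀ t, 0 < t → DifferentiableAt ℝ φ t) :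
    Filter.Tendsto (fun t => t * deriv φ t / φ t) Filter.atTop (nhds (1 / ρ₀)) := by
  -- φ tends to atTop
  have hφtop : Tendsto φ atTop atTop := by
    rw [tendsto_atTop]
    intro M
    set R := max M 1 with hR
    have hRpos : (0:ℝ) < R := lt_of_lt_of_le one_pos (le_max_right _ _)
    filter_upwards [eventually_gt_atTop (max (R ^ ρ R) 0)] with t ht
    have ht0 : 0 < t := lt_of_le_of_lt (le_max_right _ _) ht
    have htT : R ^ ρ R < t := lt_of_le_of_lt (le_max_left _ _) ht
    by_contra h
    push_neg at h
    have hφt : φ t < R := lt_of_lt_of_le h (le_max_left _ _)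
    have h2 : (φ t) ^ ρ (φ t) < R ^ ρ R :=
      hmono (Set.mem_Ioi.2 (hφpos t ht0)) (Set.mem_Ioi.2 hRpos) hφt
    rw [hφ' t ht0] at h2
    linarith
  -- key pointwise identity
  have key : ∀ t, 0 < t → t * deriv φ t / φ t
      = 1 / (ρ (φ t) + deriv ρ (φ t) * φ t * Real.log (φ t)) := by
    intro t ht0
    set r := φ t with hr
    have hr0 : 0 < r := hφpos t ht0
    have hρr : HasDerivAt ρ (deriv ρ r) r := (hdiff r).hasDerivAt
    have hg : HasDerivAt (fun x => x ^ ρ x)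
        (1 * ρ r * r ^ (ρ r - 1) + deriv ρ r * r ^ ρ r * Real.log r) r :=
      (hasDerivAt_id r).rpow hρr hr0
    have hφd : HasDerivAt φ (deriv φ t) t := (hφdiff t ht0).hasDerivAt
    have hcomp : HasDerivAt (fun s => (φ s) ^ ρ (φ s))
        ((1 * ρ r * r ^ (ρ r - 1) + deriv ρ r * r ^ ρ r * Real.log r) * deriv φ t) t :=
      hg.comp t hφd
    have hid : HasDerivAt (fun s => (φ s) ^ ρ (φ s)) 1 t := by
      have hev : (fun s => (φ s) ^ ρ (φ s)) =ᶠ[nhds t] fun s => s := by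
        filter_upwards [Ioi_mem_nhds ht0] with s hs
        exact hφ' s hs
      exact (hasDerivAt_id t).congr_of_eventuallyEq hev
    have huniq : (1 * ρ r * r ^ (ρ r - 1) + deriv ρ r * r ^ ρ r * Real.log r) * deriv φ t = 1 :=
      hcomp.unique hid
    have hrpow : r ^ (ρ r - 1) * r = r ^ ρ r := by
      rw [← Real.rpow_add_one hr0.ne' (ρ r - 1), sub_add_cancel]
    set d := deriv φ t with hd
    have hE : r ^ (ρ r - 1) * (ρ r + deriv ρ r * r * Real.log r) * d = 1 := by
      linear_combination huniq + deriv ρ r * Real.log r * d * hrpow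
    have hP : r ^ (ρ r - 1) ≠ 0 := (Real.rpow_pos_of_pos hr0 _).ne'
    have hEne : ρ r + deriv ρ r * r * Real.log r ≠ 0 := by
      intro h; rw [h] at hE; simp at hE
    have htr : r ^ ρ r = t := hφ' t ht0
    rw [eq_div_iff hEne, ← htr, ← hrpow]
    field_simp
    linear_combination hE
  -- limit of the right-hand side
  have hlimE : Tendsto (fun t => ρ (φ t) + deriv ρ (φ t) * φ t * Real.log (φ t))
      atTop (nhds ρ₀) := by
    have h1 := hlim.comp hφtop
    have h2 := hder.comp hφtop
    have h3 := h1.add h2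
    simpa using h3
  have hfinal : Tendsto (fun t => 1 / (ρ (φ t) + deriv ρ (φ t) * φ t * Real.log (φ t)))
      atTop (nhds (1 / ρ₀)) :=
    tendsto_const_nhds.div hlimE hρ₀.ne'
  apply hfinal.congr'
  filter_upwards [eventually_gt_atTop 0] with t ht
  exact (key t ht).symm
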